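/- Let u be a uniformly recurrent infinite word with no weak bispecial factor. Then u satisfies property R_m if and only if C(n) = (m−1)n + 1 for all n ≥ 0. -/

import Mathlib

variable {A : Type*}

/-- The factor of `u` of length `n` starting at position `j`. -/
def factorAt (u : ℕ → A) (j n : ℕ) : List A :=
  (List.range n).map (fun i => u (j + i))

/-- `j` is an occurrence of the finite word `w` in `u`. -/
def OccursAt (u : ℕ → A) (w : List A) (j : ℕ) : Prop :=
  factorAt u j w.length = w

/-- `w` is a factor of the infinite word `u`. -/
def IsFactor (u : ℕ → A) (w : List A) : Prop :=
  ∃ j, OccursAt u w j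

/-- `v` is a return word of `w` in `u`: the word between two successive occurrences of `w`. -/
def IsReturnWord (u : ℕ → A) (w v : List A) : Prop :=
  ∃ j k, j < k ∧ OccursAt u w j ∧ OccursAt u w k ∧
    (∀ l, j < l → l < k → ¬ OccursAt u w l) ∧ v = factorAt u j (k - j)

/-- The set `R(w)` of return words of `w` in `u`. -/
def returnWords (u : ℕ → A) (w : List A) : Set (List A) :=
  {v | IsReturnWord u w v}

/-- Property `R_m`: every factor of `u` has exactly `m` return words. -/
def PropertyR (u : ℕ → A) (m : ℕ) : Prop :=
  ∀ w, IsFactor u w → (returnWords u w).Finite ∧ (returnWords u w).ncard = m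

/-- The set of left extensions of `w`. -/
def leftExt (u : ℕ → A) (w : List A) : Set A := {a | IsFactor u (a :: w)}

/-- The set of right extensions of `w`. -/
def rightExt (u : ℕ → A) (w : List A) : Set A := {b | IsFactor u (w ++ [b])}

def LeftSpecial (u : ℕ → A) (w : List A) : Prop := 2 ≤ (leftExt u w).ncard

def RightSpecial (u : ℕ → A) (w : List A) : Prop := 2 ≤ (rightExt u w).ncard

/-- The set of pairs `(a, b)` such that `a w b` is a factor of `u`. -/
def extPairs (u : ℕ → A) (w : List A) : Set (A × A) :=
  {p | IsFactor u (p.1 :: (w ++ [p.2]))}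

/-- The bilateral order `B(w)`. -/
noncomputable def bilateralOrder (u : ℕ → A) (w : List A) : ℤ :=
  ((extPairs u w).ncard : ℤ) - (leftExt u w).ncard - (rightExt u w).ncard + 1

/-- `w` is a weak bispecial factor of `u`. -/
def WeakBispecial (u : ℕ → A) (w : List A) : Prop :=
  IsFactor u w ∧ bilateralOrder u w < 0

/-- The factor complexity of `u`. -/
noncomputable def Complexity (u : ℕ → A) (n : ℕ) : ℕ :=
  {w : List A | w.length = n ∧ IsFactor u w}.ncard

/-- `u` is recurrent: every factor occurs at least twice. -/
def Recurrent (u : ℕ → A) : Prop :=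
  ∀ w, IsFactor u w → ∃ j k, j < k ∧ OccursAt u w j ∧ OccursAt u w k

/-- `u` is uniformly recurrent. -/
def UniformlyRecurrent (u : ℕ → A) : Prop :=
  ∀ n : ℕ, ∃ N : ℕ, ∀ w, IsFactor u w → w.length = N →
    ∀ v, IsFactor u v → v.length = n → v <:+: w

def EventuallyPeriodic (u : ℕ → A) : Prop :=
  ∃ p, 0 < p ∧ ∃ N, ∀ n, N ≤ n → u (n + p) = u n

/-- `w` is a maximal right special factor. -/
def MaximalRightSpecial (u : ℕ → A) (w : List A) : Prop :=
  IsFactor u w ∧ RightSpecial u w ∧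
    ∀ v, IsFactor u v → RightSpecial u v → w <:+ v → v = w

/-- The return word `v` of `w` starts with the letter `b`. -/
def StartsWithLetter (w v : List A) (b : A) : Prop := (w ++ [b]) <+: (v ++ w)
section Aux
variable {A : Type*} {u : ℕ → A}

@[simp] lemma factorAt_length (u : ℕ → A) (j n : ℕ) : (factorAt u j n).length = n := by
  simp [factorAt]

@[simp] lemma factorAt_zero (u : ℕ → A) (j : ℕ) : factorAt u j 0 = [] := by simp [factorAt]

lemma factorAt_snoc (u : ℕ → A) (j n : ℕ) :
    factorAt u j (n+1) = factorAt u j n ++ [u (j+n)] := by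
  simp [factorAt, List.range_succ]

lemma factorAt_add (u : ℕ → A) (j a b : ℕ) :
    factorAt u j (a+b) = factorAt u j a ++ factorAt u (j+a) b := by
  induction b with
  | zero => simp
  | succ b ih => rw [← Nat.add_assoc, factorAt_snoc, ih, factorAt_snoc]
                 simp [Nat.add_assoc, List.append_assoc]

lemma factorAt_one (u : ℕ → A) (j : ℕ) : factorAt u j 1 = [u j] := by
  simp [factorAt, List.range_succ]

lemma factorAt_cons (u : ℕ → A) (j n : ℕ) :
    factorAt u j (n+1) = u j :: factorAt u (j+1) n := by
  have := factorAt_add u j 1 n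
  rw [Nat.add_comm 1 n] at this
  rw [this, factorAt_one]
  rfl

lemma factorAt_take (u : ℕ → A) (j n k : ℕ) (h : k ≤ n) :
    (factorAt u j n).take k = factorAt u j k := by
  obtain ⟨c, rfl⟩ := Nat.exists_eq_add_of_le h
  rw [factorAt_add, List.take_left' (by simp)]

lemma factorAt_drop (u : ℕ → A) (j n k : ℕ) (h : k ≤ n) :
    (factorAt u j n).drop k = factorAt u (j+k) (n-k) := by
  obtain ⟨c, rfl⟩ := Nat.exists_eq_add_of_le h
  rw [factorAt_add, List.drop_left' (by simp)]
  simp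

lemma isFactor_factorAt (u : ℕ → A) (j n : ℕ) : IsFactor u (factorAt u j n) :=
  ⟨j, by simp [OccursAt]⟩

lemma IsFactor.eq_factorAt {w : List A} (h : OccursAt u w j) : w = factorAt u j w.length :=
  h.symm

/-- an infix of a factor is a factor, with occurrence knowledge -/
lemma occursAt_of_infix {x y : List A} {j : ℕ} (hx : OccursAt u x j) (h : y <:+: x) :
    ∃ s t : List A, x = s ++ y ++ t ∧ OccursAt u y (j + s.length) := by
  obtain ⟨s, t, hst⟩ := h
  refine ⟨s, t, hst.symm, ?_⟩
  have hx' : x = factorAt u j x.length := hx.symm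
  have hlen : s.length + y.length ≤ x.length := by
    rw [← hst]; simp
  have : y = ((factorAt u j x.length).drop s.length).take y.length := by
    rw [← hx', ← hst]
    rw [List.append_assoc, List.drop_left, List.take_left]
  rw [factorAt_drop _ _ _ _ (by omega), factorAt_take _ _ _ _ (by omega)] at this
  exact this.symm

lemma isFactor_of_infix {x y : List A} (hx : IsFactor u x) (h : y <:+: x) : IsFactor u y := by
  obtain ⟨j, hj⟩ := hx
  obtain ⟨s, t, _, ho⟩ := occursAt_of_infix hj h
  exact ⟨_, ho⟩

lemma isFactor_of_prefix {x y : List A} (hx : IsFactor u x) (h : y <+: x) : IsFactor u y :=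
  isFactor_of_infix hx h.isInfix

lemma isFactor_of_suffix {x y : List A} (hx : IsFactor u x) (h : y <:+ x) : IsFactor u y :=
  isFactor_of_infix hx h.isInfix

end Aux
section Aux2
variable {A : Type*} {u : ℕ → A}

lemma suffix_drop_eq {s p : List A} (h : s <:+ p) : p.drop (p.length - s.length) = s :=
  (List.suffix_iff_eq_drop.1 h).symm

lemma suffix_of_suffix_length_le {s t x : List A} (hs : s <:+ x) (ht : t <:+ x)
    (h : s.length ≤ t.length) : s <:+ t := by
  have hs' := List.suffix_iff_eq_drop.1 hs
  have ht' := List.suffix_iff_eq_drop.1 ht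
  have hxs := hs.length_le
  have hxt := ht.length_le
  have : s = t.drop (t.length - s.length) := by
    nth_rewrite 2 [ht']
    rw [List.drop_drop]
    nth_rewrite 1 [hs']
    congr 1
    omega
  rw [this]
  exact List.drop_suffix _ _

lemma suffix_eq_of_length_eq {s t x : List A} (hs : s <:+ x) (ht : t <:+ x)
    (h : s.length = t.length) : s = t := by
  have h1 := suffix_of_suffix_length_le hs ht h.le
  exact h1.eq_of_length h

/-- uniform recurrence gives a window size for each factor -/
lemma exists_window (hur : UniformlyRecurrent u) {w : List A} (hw : IsFactor u w) :
    ∃ N, ∀ q, ∃ i, i + w.length ≤ N ∧ OccursAt u w (q + i) := by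
  obtain ⟨N, hN⟩ := hur w.length
  refine ⟨N, fun q => ?_⟩
  have hx : OccursAt u (factorAt u q N) q := by simp [OccursAt]
  have hinf : w <:+: factorAt u q N :=
    hN _ (isFactor_factorAt u q N) (by simp) w hw rfl
  obtain ⟨s, t, hst, ho⟩ := occursAt_of_infix hx hinf
  refine ⟨s.length, ?_, ho⟩
  have := congrArg List.length hst
  simp at this
  omega

lemma exists_left_ext (hur : UniformlyRecurrent u) {w : List A} (hw : IsFactor u w) :
    ∃ a, IsFactor u (a :: w) := by
  obtain ⟨N, hN⟩ := exists_window hur hw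
  obtain ⟨i, _, ho⟩ := hN 1
  refine ⟨u i, i, ?_⟩
  unfold OccursAt at ho ⊢
  simp only [List.length_cons]
  rw [factorAt_cons]
  rw [show 1 + i = i + 1 by omega] at ho
  rw [ho]

lemma exists_right_ext {w : List A} (hw : IsFactor u w) :
    ∃ b, IsFactor u (w ++ [b]) := by
  obtain ⟨j, hj⟩ := hw
  refine ⟨u (j + w.length), j, ?_⟩
  unfold OccursAt at hj ⊢
  simp only [List.length_append, List.length_cons, List.length_nil]
  rw [factorAt_snoc, hj]

end Aux2

section Aux3
variable (A : Type*) [Fintype A]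
open scoped Classical

noncomputable def listsLen (n : ℕ) : Finset (List A) :=
  (Finset.univ : Finset (Fin n → A)).image List.ofFn

variable {A}

lemma mem_listsLen {n : ℕ} {x : List A} : x ∈ listsLen A n ↔ x.length = n := by
  constructor
  · intro hx
    obtain ⟨f, _, rfl⟩ := Finset.mem_image.1 hx
    simp
  · intro hx
    subst hx
    exact Finset.mem_image.2 ⟨fun i => x[(i:ℕ)], Finset.mem_univ _, List.ofFn_getElem (xs := x)⟩

variable (u : ℕ → A)

noncomputable def FactF (n : ℕ) : Finset (List A) :=
  (listsLen A n).filter (fun w => IsFactor u w)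

noncomputable def erF (w : List A) : Finset A :=
  Finset.univ.filter (fun b => IsFactor u (w ++ [b]))

noncomputable def elF (w : List A) : Finset A :=
  Finset.univ.filter (fun a => IsFactor u (a :: w))

noncomputable def epF (w : List A) : Finset (A × A) :=
  Finset.univ.filter (fun p => IsFactor u (p.1 :: (w ++ [p.2])))

variable {u}

lemma mem_FactF {n : ℕ} {x : List A} : x ∈ FactF u n ↔ x.length = n ∧ IsFactor u x := by
  rw [FactF, Finset.mem_filter, mem_listsLen]

lemma complexity_eq (n : ℕ) : Complexity u n = (FactF u n).card := by
  have : {w : List A | w.length = n ∧ IsFactor u w} = ↑(FactF u n) := by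
    ext x; simp [mem_FactF]
  rw [Complexity, this, Set.ncard_coe_finset]

lemma rightExt_ncard (w : List A) : (rightExt u w).ncard = (erF u w).card := by
  have : rightExt u w = ↑(erF u w) := by ext b; simp [rightExt, erF]
  rw [this, Set.ncard_coe_finset]

lemma leftExt_ncard (w : List A) : (leftExt u w).ncard = (elF u w).card := by
  have : leftExt u w = ↑(elF u w) := by ext b; simp [leftExt, elF]
  rw [this, Set.ncard_coe_finset]

lemma extPairs_ncard (w : List A) : (extPairs u w).ncard = (epF u w).card := by
  have : extPairs u w = ↑(epF u w) := by ext p; simp [extPairs, epF]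
  rw [this, Set.ncard_coe_finset]

lemma er_pos {w : List A} (hw : IsFactor u w) : 0 < (erF u w).card := by
  obtain ⟨b, hb⟩ := exists_right_ext hw
  exact Finset.card_pos.2 ⟨b, by simp [erF, hb]⟩

end Aux3
section Aux4
variable {A : Type*} [Fintype A] {u : ℕ → A}
open scoped Classical

lemma sum_FactF_succ {M : Type*} [AddCommMonoid M] (n : ℕ) (f : List A → M) :
    ∑ x ∈ FactF u (n+1), f x = ∑ w ∈ FactF u n, ∑ b ∈ erF u w, f (w ++ [b]) := by
  rw [← Finset.sum_fiberwise_of_maps_to (g := List.dropLast) (t := FactF u n) ?_ f]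
  · apply Finset.sum_congr rfl
    intro w hw
    have : (FactF u (n+1)).filter (fun x => x.dropLast = w) =
        (erF u w).image (fun b => w ++ [b]) := by
      ext x
      simp only [Finset.mem_filter, mem_FactF, Finset.mem_image, erF, Finset.mem_univ,
        true_and]
      constructor
      · rintro ⟨⟨hlen, hfac⟩, hd⟩
        have hne : x ≠ [] := by intro h; rw [h] at hlen; simp at hlen
        have hx : w ++ [x.getLast hne] = x := by
          rw [← hd]; exact List.dropLast_append_getLast hne
        exact ⟨x.getLast hne, by rwa [hx], hx⟩
      · rintro ⟨b, hb, rfl⟩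
        exact ⟨⟨by simp [mem_FactF.1 (by exact hw) |>.1], hb⟩, List.dropLast_concat⟩
    rw [this, Finset.sum_image]
    intro a _ b _ h
    simpa using h
  · intro x hx
    obtain ⟨hlen, hfac⟩ := mem_FactF.1 hx
    refine mem_FactF.2 ⟨by simp [hlen], isFactor_of_prefix hfac (List.dropLast_prefix x)⟩

lemma sum_FactF_succ_left {M : Type*} [AddCommMonoid M] (n : ℕ) (f : List A → M) :
    ∑ x ∈ FactF u (n+1), f x = ∑ w ∈ FactF u n, ∑ a ∈ elF u w, f (a :: w) := by
  rw [← Finset.sum_fiberwise_of_maps_to (g := List.tail) (t := FactF u n) ?_ f]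
  · apply Finset.sum_congr rfl
    intro w hw
    have : (FactF u (n+1)).filter (fun x => x.tail = w) =
        (elF u w).image (fun a => a :: w) := by
      ext x
      simp only [Finset.mem_filter, mem_FactF, Finset.mem_image, elF, Finset.mem_univ,
        true_and]
      constructor
      · rintro ⟨⟨hlen, hfac⟩, hd⟩
        have hne : x ≠ [] := by intro h; rw [h] at hlen; simp at hlen
        have hx : x.head hne :: w = x := by
          rw [← hd]; exact List.cons_head_tail hne
        exact ⟨x.head hne, by rwa [hx], hx⟩
      · rintro ⟨a, ha, rfl⟩
        exact ⟨⟨by simp [mem_FactF.1 (by exact hw) |>.1], ha⟩, rfl⟩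
    rw [this, Finset.sum_image]
    intro a _ b _ h
    simpa using h
  · intro x hx
    obtain ⟨hlen, hfac⟩ := mem_FactF.1 hx
    refine mem_FactF.2 ⟨by simp [hlen], isFactor_of_suffix hfac (List.tail_suffix x)⟩

lemma sum_FactF_two {M : Type*} [AddCommMonoid M] (n : ℕ) (f : List A → M) :
    ∑ x ∈ FactF u (n+2), f x = ∑ w ∈ FactF u n, ∑ p ∈ epF u w, f (p.1 :: (w ++ [p.2])) := by
  rw [sum_FactF_succ_left (n+1) f]
  rw [sum_FactF_succ n (fun y => ∑ a ∈ elF u y, f (a :: y))]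
  apply Finset.sum_congr rfl
  intro w hw
  rw [← Finset.sum_fiberwise_of_maps_to (g := Prod.snd) (t := erF u w)
      ?_ (fun p => f (p.1 :: (w ++ [p.2])))]
  · apply Finset.sum_congr rfl
    intro b hb
    have : (epF u w).filter (fun p => p.2 = b) = (elF u (w ++ [b])).image (fun a => (a, b)) := by
      ext p
      simp only [Finset.mem_filter, epF, elF, Finset.mem_univ, true_and, Finset.mem_image]
      constructor
      · rintro ⟨hfac, hd⟩
        exact ⟨p.1, by rwa [← hd], by rw [← hd]⟩
      · rintro ⟨a, ha, rfl⟩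
        exact ⟨ha, rfl⟩
    rw [this, Finset.sum_image]
    intro a _ c _ h
    simpa using h
  · intro p hp
    simp only [epF, Finset.mem_filter, Finset.mem_univ, true_and] at hp
    simp only [erF, Finset.mem_filter, Finset.mem_univ, true_and]
    exact isFactor_of_suffix hp (List.suffix_cons _ _)

lemma ep_split (w : List A) :
    ((epF u w).card : ℤ) = ∑ a ∈ elF u w, ((erF u (a :: w)).card : ℤ) := by
  have h : (epF u w).card = ∑ a ∈ elF u w, (erF u (a :: w)).card := by
    rw [Finset.card_eq_sum_card_fiberwise (f := Prod.fst) (t := elF u w) ?_]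
    · apply Finset.sum_congr rfl
      intro a ha
      have : (epF u w).filter (fun p => p.1 = a) = (erF u (a :: w)).image (fun b => (a, b)) := by
        ext p
        simp only [Finset.mem_filter, epF, erF, Finset.mem_univ, true_and, Finset.mem_image]
        constructor
        · rintro ⟨hfac, hd⟩
          refine ⟨p.2, ?_, by rw [← hd]⟩
          rw [List.cons_append]
          rwa [← hd]
        · rintro ⟨b, hb, rfl⟩
          rw [List.cons_append] at hb
          exact ⟨hb, rfl⟩
      rw [this, Finset.card_image_of_injective]
      intro a b h
      simpa using h
    · intro p hp
      simp only [Finset.mem_coe, epF, Finset.mem_filter, Finset.mem_univ, true_and] at hp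
      simp only [Finset.mem_coe, elF, Finset.mem_filter, Finset.mem_univ, true_and]
      apply isFactor_of_prefix hp
      exact ⟨[p.2], by simp⟩
  exact_mod_cast congrArg (Nat.cast : ℕ → ℤ) h

lemma B_nonneg (hwb : ∀ w, ¬ WeakBispecial u w) {w : List A} (hw : IsFactor u w) :
    ((elF u w).card : ℤ) + (erF u w).card ≤ (epF u w).card + 1 := by
  have h := hwb w
  rw [WeakBispecial] at h
  push_neg at h
  have h2 := h hw
  rw [bilateralOrder, extPairs_ncard, leftExt_ncard, rightExt_ncard] at h2
  omega

/-- the flow value μ -/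
noncomputable def muF (u : ℕ → A) (w : List A) : ℤ := ((erF u w).card : ℤ) - 1

lemma flow_ge (hwb : ∀ w, ¬ WeakBispecial u w) {w : List A} (hw : IsFactor u w) :
    muF u w ≤ ∑ a ∈ elF u w, muF u (a :: w) := by
  have h1 := ep_split (u := u) w
  have h2 := B_nonneg hwb hw
  have h3 : ∑ a ∈ elF u w, muF u (a :: w)
      = ∑ a ∈ elF u w, ((erF u (a :: w)).card : ℤ) - (elF u w).card := by
    simp only [muF]
    rw [Finset.sum_sub_distrib]
    simp
  rw [muF, h3, ← h1]
  omega

lemma flow_eq (hB : ∀ w, IsFactor u w →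
      ((epF u w).card : ℤ) + 1 = (elF u w).card + (erF u w).card)
    {w : List A} (hw : IsFactor u w) :
    muF u w = ∑ a ∈ elF u w, muF u (a :: w) := by
  have h1 := ep_split (u := u) w
  have h2 := hB w hw
  have h3 : ∑ a ∈ elF u w, muF u (a :: w)
      = ∑ a ∈ elF u w, ((erF u (a :: w)).card : ℤ) - (elF u w).card := by
    simp only [muF]
    rw [Finset.sum_sub_distrib]
    simp
  rw [muF, h3, ← h1]
  omega

end Aux4
section Aux5
variable {A : Type*} [Fintype A] {u : ℕ → A}
open scoped Classical

lemma S_partition (v : List A) (S : Finset (List A)) (hvS : v ∉ S)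
    (hS : ∀ p ∈ S, IsFactor u p ∧ v <:+ p) :
    ∑ p ∈ S, muF u p = ∑ a ∈ elF u v, ∑ p ∈ S.filter (fun p => (a :: v) <:+ p), muF u p := by
  have hlen : ∀ p ∈ S, v.length + 1 ≤ p.length := by
    intro p hp
    have h1 : v <:+ p := (hS p hp).2
    have h2 : v.length ≤ p.length := h1.length_le
    rcases Nat.lt_or_ge v.length p.length with h | h
    · omega
    · exfalso
      exact hvS ((h1.eq_of_length (by omega)) ▸ hp)
  rw [← Finset.sum_fiberwise_of_maps_to
    (g := fun p => p.drop (p.length - (v.length + 1)))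
    (t := (elF u v).image (fun a => a :: v)) ?_ (muF u)]
  · rw [Finset.sum_image (by intro a _ b _ h; simpa using h)]
    apply Finset.sum_congr rfl
    intro a _
    apply Finset.sum_congr ?_ (fun _ _ => rfl)
    ext q
    simp only [Finset.mem_filter, and_congr_right_iff]
    intro hq
    constructor
    · intro h
      rw [← h]
      exact List.drop_suffix _ _
    · intro h
      have := suffix_drop_eq h
      simpa using this
  · intro p hp
    have h1 : v <:+ p := (hS p hp).2
    have hlp := hlen p hp
    set y := p.drop (p.length - (v.length + 1)) with hy
    have hys : y <:+ p := List.drop_suffix _ _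
    have hylen : y.length = v.length + 1 := by
      simp [hy]
      omega
    have hvy : v <:+ y := suffix_of_suffix_length_le h1 hys (by omega)
    have hyne : y ≠ [] := by
      intro h; rw [h] at hylen; simp at hylen
    have hty : y.tail = v := by
      apply suffix_eq_of_length_eq (List.tail_suffix y) hvy
      simp [hylen]
    have hyc : y = y.head hyne :: v := by
      rw [← hty]
      exact (List.cons_head_tail hyne).symm
    refine Finset.mem_image.2 ⟨y.head hyne, ?_, hyc.symm⟩
    simp only [elF, Finset.mem_filter, Finset.mem_univ, true_and]
    rw [← hyc]
    exact isFactor_of_suffix (hS p hp).1 hys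

lemma Slemma_ge (hwb : ∀ w, ¬ WeakBispecial u w)
    (d L' : ℕ) (v : List A) (S : Finset (List A)) (hv : IsFactor u v)
    (hlen : v.length + d = L')
    (hS : ∀ p ∈ S, IsFactor u p ∧ v <:+ p)
    (hanti : ∀ p ∈ S, ∀ p' ∈ S, p <:+ p' → p = p')
    (hcov : ∀ x, IsFactor u x → x.length = L' → v <:+ x → ∃ p ∈ S, p <:+ x) :
    muF u v ≤ ∑ p ∈ S, muF u p := by
  induction d generalizing v S with
  | zero =>
    by_cases hvS : v ∈ S
    · have hSv : S = {v} := by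
        apply Finset.eq_singleton_iff_unique_mem.2 ⟨hvS, ?_⟩
        intro p hp
        exact (hanti v hvS p hp (hS p hp).2).symm
      simp [hSv]
    · exfalso
      obtain ⟨p, hp, hpx⟩ := hcov v hv (by omega) (List.suffix_refl v)
      have h1 : v <:+ p := (hS p hp).2
      have : p = v := hpx.eq_of_length (le_antisymm hpx.length_le h1.length_le)
      exact hvS (this ▸ hp)
  | succ d ih =>
    by_cases hvS : v ∈ S
    · have hSv : S = {v} := by
        apply Finset.eq_singleton_iff_unique_mem.2 ⟨hvS, ?_⟩
        intro p hp
        exact (hanti v hvS p hp (hS p hp).2).symm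
      simp [hSv]
    · rw [S_partition v S hvS hS]
      refine le_trans (flow_ge hwb hv) (Finset.sum_le_sum ?_)
      intro a ha
      have hav : IsFactor u (a :: v) := by
        simpa [elF] using ha
      apply ih (a :: v) (S.filter (fun p => (a :: v) <:+ p)) hav (by simp; omega)
      · intro p hp
        have hp' := Finset.mem_filter.1 hp
        exact ⟨(hS p hp'.1).1, hp'.2⟩
      · intro p hp p' hp' hsuf
        exact hanti p (Finset.mem_filter.1 hp).1 p' (Finset.mem_filter.1 hp').1 hsuf
      · intro x hx hxlen hsuf
        obtain ⟨p, hp, hpx⟩ := hcov x hx hxlen ((List.suffix_cons a v).trans hsuf)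
        refine ⟨p, Finset.mem_filter.2 ⟨hp, ?_⟩, hpx⟩
        have h1 : v <:+ p := (hS p hp).2
        have hne : p ≠ v := fun h => hvS (h ▸ hp)
        have hlp : v.length + 1 ≤ p.length := by
          have := h1.length_le
          rcases Nat.lt_or_ge v.length p.length with h | h
          · omega
          · exact absurd (h1.eq_of_length (by omega)) (Ne.symm hne)
        exact suffix_of_suffix_length_le hsuf hpx (by simp; omega)

lemma Slemma_eq (hB : ∀ w, IsFactor u w →
      ((epF u w).card : ℤ) + 1 = (elF u w).card + (erF u w).card)
    (d L' : ℕ) (v : List A) (S : Finset (List A)) (hv : IsFactor u v)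
    (hlen : v.length + d = L')
    (hS : ∀ p ∈ S, IsFactor u p ∧ v <:+ p)
    (hanti : ∀ p ∈ S, ∀ p' ∈ S, p <:+ p' → p = p')
    (hcov : ∀ x, IsFactor u x → x.length = L' → v <:+ x → ∃ p ∈ S, p <:+ x) :
    muF u v = ∑ p ∈ S, muF u p := by
  induction d generalizing v S with
  | zero =>
    by_cases hvS : v ∈ S
    · have hSv : S = {v} := by
        apply Finset.eq_singleton_iff_unique_mem.2 ⟨hvS, ?_⟩
        intro p hp
        exact (hanti v hvS p hp (hS p hp).2).symm
      simp [hSv]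
    · exfalso
      obtain ⟨p, hp, hpx⟩ := hcov v hv (by omega) (List.suffix_refl v)
      have h1 : v <:+ p := (hS p hp).2
      have : p = v := hpx.eq_of_length (le_antisymm hpx.length_le h1.length_le)
      exact hvS (this ▸ hp)
  | succ d ih =>
    by_cases hvS : v ∈ S
    · have hSv : S = {v} := by
        apply Finset.eq_singleton_iff_unique_mem.2 ⟨hvS, ?_⟩
        intro p hp
        exact (hanti v hvS p hp (hS p hp).2).symm
      simp [hSv]
    · rw [S_partition v S hvS hS]
      rw [flow_eq hB hv]
      apply Finset.sum_congr rfl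
      intro a ha
      have hav : IsFactor u (a :: v) := by
        simpa [elF] using ha
      apply ih (a :: v) (S.filter (fun p => (a :: v) <:+ p)) hav (by simp; omega)
      · intro p hp
        have hp' := Finset.mem_filter.1 hp
        exact ⟨(hS p hp'.1).1, hp'.2⟩
      · intro p hp p' hp' hsuf
        exact hanti p (Finset.mem_filter.1 hp).1 p' (Finset.mem_filter.1 hp').1 hsuf
      · intro x hx hxlen hsuf
        obtain ⟨p, hp, hpx⟩ := hcov x hx hxlen ((List.suffix_cons a v).trans hsuf)
        refine ⟨p, Finset.mem_filter.2 ⟨hp, ?_⟩, hpx⟩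
        have h1 : v <:+ p := (hS p hp).2
        have hne : p ≠ v := fun h => hvS (h ▸ hp)
        have hlp : v.length + 1 ≤ p.length := by
          have := h1.length_le
          rcases Nat.lt_or_ge v.length p.length with h | h
          · omega
          · exact absurd (h1.eq_of_length (by omega)) (Ne.symm hne)
        exact suffix_of_suffix_length_le hsuf hpx (by simp; omega)

end Aux5
section Aux6
variable {A : Type*} [Fintype A] {u : ℕ → A}
open scoped Classical

/-- occurrence of `w` inside the list `p` at position `i` -/
def OccIn (w p : List A) (i : ℕ) : Prop := i + w.length ≤ p.length ∧ w <+: p.drop i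

lemma occIn_factorAt {w : List A} {q ℓ i : ℕ} (h : i + w.length ≤ ℓ) :
    OccIn w (factorAt u q ℓ) i ↔ OccursAt u w (q + i) := by
  unfold OccIn
  rw [factorAt_drop u q ℓ i (by omega)]
  rw [List.prefix_iff_eq_take, factorAt_take u _ _ _ (by omega)]
  unfold OccursAt
  simp only [factorAt_length]
  constructor
  · rintro ⟨-, h2⟩; exact h2.symm
  · intro h2; exact ⟨by simpa using h, h2.symm⟩

lemma occIn_of_prefix {w p p' : List A} {i : ℕ} (hpp : p <+: p') (h : OccIn w p i) :
    OccIn w p' i := by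
  obtain ⟨h1, h2⟩ := h
  refine ⟨le_trans h1 hpp.length_le, ?_⟩
  exact h2.trans (hpp.drop i)

lemma occIn_take {w p : List A} {i k : ℕ} (h : OccIn w p i) (hk : i + w.length ≤ k) :
    OccIn w (p.take k) i := by
  obtain ⟨h1, h2⟩ := h
  constructor
  · simp; omega
  · rw [List.drop_take]
    rw [List.prefix_take_iff]
    exact ⟨h2, by omega⟩

lemma occIn_drop {w p : List A} {j i : ℕ} (hj : j ≤ p.length) :
    OccIn w (p.drop j) i ↔ OccIn w p (j + i) := by
  unfold OccIn
  rw [List.drop_drop, List.length_drop]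
  constructor
  · rintro ⟨h1, h2⟩
    exact ⟨by omega, h2⟩
  · rintro ⟨h1, h2⟩
    exact ⟨by omega, h2⟩

variable (u)

noncomputable def UsetF (w : List A) (ℓ : ℕ) : Finset (List A) :=
  (FactF u ℓ).filter (fun p => w <+: p ∧ ∀ i, 0 < i → ¬ OccIn w p i)

noncomputable def CRsetF (w : List A) (ℓ : ℕ) : Finset (List A) :=
  (FactF u ℓ).filter (fun c => w <+: c ∧ OccIn w c (ℓ - w.length) ∧ 0 < ℓ - w.length ∧
    ∀ i, 0 < i → i < ℓ - w.length → ¬ OccIn w c i)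

variable {u}

lemma mem_UsetF {w p : List A} {ℓ : ℕ} :
    p ∈ UsetF u w ℓ ↔ (p.length = ℓ ∧ IsFactor u p) ∧ w <+: p ∧ ∀ i, 0 < i → ¬ OccIn w p i := by
  rw [UsetF, Finset.mem_filter, mem_FactF]

lemma mem_CRsetF {w c : List A} {ℓ : ℕ} :
    c ∈ CRsetF u w ℓ ↔ (c.length = ℓ ∧ IsFactor u c) ∧ w <+: c ∧ OccIn w c (ℓ - w.length) ∧
      0 < ℓ - w.length ∧ ∀ i, 0 < i → i < ℓ - w.length → ¬ OccIn w c i := by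
  rw [CRsetF, Finset.mem_filter, mem_FactF]

lemma UsetF_self {w : List A} (hw : IsFactor u w) : UsetF u w w.length = {w} := by
  ext p
  rw [mem_UsetF, Finset.mem_singleton]
  constructor
  · rintro ⟨⟨hlen, -⟩, hpre, -⟩
    exact (hpre.eq_of_length (by omega)).symm
  · rintro rfl
    refine ⟨⟨rfl, hw⟩, List.prefix_refl _, ?_⟩
    rintro i hi ⟨h1, -⟩
    omega

lemma UsetF_empty {w : List A} {N : ℕ}
    (hN : ∀ q, ∃ i, i + w.length ≤ N ∧ OccursAt u w (q + i)) {ℓ : ℕ}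
    (hℓ : N + w.length + 1 ≤ ℓ) : UsetF u w ℓ = ∅ := by
  rw [Finset.eq_empty_iff_forall_notMem]
  intro p hp
  obtain ⟨⟨hlen, hfac⟩, hpre, hno⟩ := mem_UsetF.1 hp
  obtain ⟨q₀, hq₀⟩ := hfac
  obtain ⟨i₀, hi₀, ho⟩ := hN (q₀ + 1)
  have hple : p = factorAt u q₀ ℓ := by
    have := hq₀; unfold OccursAt at this; rw [hlen] at this; exact this.symm
  refine hno (1 + i₀) (by omega) ?_
  rw [hple, occIn_factorAt (by omega)]
  rw [show q₀ + (1 + i₀) = q₀ + 1 + i₀ by omega]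
  exact ho

end Aux6
section Aux7
variable {A : Type*} [Fintype A] {u : ℕ → A}
open scoped Classical

lemma snoc_occ_eq {w p : List A} {b : A} (hp : p ∈ UsetF u w p.length)
    {i : ℕ} (hi : 0 < i) (hocc : OccIn w (p ++ [b]) i) : i + w.length = p.length + 1 := by
  obtain ⟨-, -, hno⟩ := mem_UsetF.1 hp
  have hbound := hocc.1
  simp only [List.length_append, List.length_cons, List.length_nil] at hbound
  rcases Nat.lt_or_ge (i + w.length) (p.length + 1) with h | h
  · exfalso
    have h2 : OccIn w ((p ++ [b]).take p.length) i := occIn_take hocc (by omega)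
    rw [show p.length = (p).length from rfl, List.take_left] at h2
    exact hno i hi h2
  · omega

lemma Uset_step {w : List A} {ℓ : ℕ} (hℓ : w.length ≤ ℓ) :
    ∑ p ∈ UsetF u w ℓ, ((erF u p).card : ℤ)
      = (UsetF u w (ℓ+1)).card + (CRsetF u w (ℓ+1)).card := by
  have hdisj : Disjoint (UsetF u w (ℓ+1)) (CRsetF u w (ℓ+1)) := by
    rw [Finset.disjoint_left]
    intro x hxu hxc
    obtain ⟨-, -, hno⟩ := mem_UsetF.1 hxu
    obtain ⟨-, -, hocc, hpos, -⟩ := mem_CRsetF.1 hxc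
    exact hno _ hpos hocc
  have hnat : (UsetF u w (ℓ+1) ∪ CRsetF u w (ℓ+1)).card
      = ∑ p ∈ UsetF u w ℓ, (erF u p).card := by
    rw [Finset.card_eq_sum_card_fiberwise (f := List.dropLast) (t := UsetF u w ℓ) ?_]
    · apply Finset.sum_congr rfl
      intro p hp
      have hplen : p.length = ℓ := (mem_UsetF.1 hp).1.1
      have hfib : (UsetF u w (ℓ+1) ∪ CRsetF u w (ℓ+1)).filter (fun x => x.dropLast = p)
          = (erF u p).image (fun b => p ++ [b]) := by
        ext x
        simp only [Finset.mem_filter, Finset.mem_image, Finset.mem_union]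
        constructor
        · rintro ⟨hxu, hd⟩
          have hxlen : x.length = ℓ + 1 := by
            rcases hxu with h | h
            · exact (mem_UsetF.1 h).1.1
            · exact (mem_CRsetF.1 h).1.1
          have hxfac : IsFactor u x := by
            rcases hxu with h | h
            · exact (mem_UsetF.1 h).1.2
            · exact (mem_CRsetF.1 h).1.2
          have hne : x ≠ [] := by intro h; rw [h] at hxlen; simp at hxlen
          have hx : p ++ [x.getLast hne] = x := by
            rw [← hd]; exact List.dropLast_append_getLast hne
          refine ⟨x.getLast hne, ?_, hx⟩
          simp only [erF, Finset.mem_filter, Finset.mem_univ, true_and]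
          rwa [hx]
        · rintro ⟨b, hb, rfl⟩
          refine ⟨?_, List.dropLast_concat⟩
          simp only [erF, Finset.mem_filter, Finset.mem_univ, true_and] at hb
          obtain ⟨⟨hplen', hpfac⟩, hppre, hpno⟩ := mem_UsetF.1 hp
          have hlen1 : (p ++ [b]).length = ℓ + 1 := by simp [hplen]
          have hpre1 : w <+: p ++ [b] := hppre.trans (List.prefix_append p [b])
          have hp' : p ∈ UsetF u w p.length := by rw [hplen]; exact hp
          by_cases hocc : ∃ i, 0 < i ∧ OccIn w (p ++ [b]) i
          · right
            obtain ⟨i, hi0, hoc⟩ := hocc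
            have hie := snoc_occ_eq hp' hi0 hoc
            rw [mem_CRsetF]
            have hieq : i = ℓ + 1 - w.length := by omega
            refine ⟨⟨hlen1, hb⟩, hpre1, by rwa [← hieq], by omega, ?_⟩
            intro i' hi'0 hi'lt hoc'
            have := snoc_occ_eq hp' hi'0 hoc'
            omega
          · left
            rw [mem_UsetF]
            push_neg at hocc
            exact ⟨⟨hlen1, hb⟩, hpre1, hocc⟩
      rw [hfib, Finset.card_image_of_injective]
      intro a b h
      simpa using h
    · intro x hx
      have hx' : x.length = ℓ+1 ∧ IsFactor u x ∧ w <+: x ∧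
          (∀ i, 0 < i → ¬ OccIn w x i ∨ i + w.length = ℓ + 1) := by
        rcases Finset.mem_union.1 hx with h | h
        · obtain ⟨⟨h1, h2⟩, h3, h4⟩ := mem_UsetF.1 h
          exact ⟨h1, h2, h3, fun i hi => Or.inl (h4 i hi)⟩
        · obtain ⟨⟨h1, h2⟩, h3, h4, h5, h6⟩ := mem_CRsetF.1 h
          refine ⟨h1, h2, h3, fun i hi => ?_⟩
          by_cases hcase : i < ℓ + 1 - w.length
          · exact Or.inl (h6 i hi hcase)
          · by_cases hcase2 : i + w.length ≤ ℓ + 1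
            · right; omega
            · left; rintro ⟨hb, -⟩; rw [h1] at hb; omega
      obtain ⟨hxlen, hxfac, hxpre, hxno⟩ := hx'
      rw [Finset.mem_coe, mem_UsetF]
      have hdl : x.dropLast = x.take ℓ := by
        rw [List.dropLast_eq_take, hxlen]
        rfl
      refine ⟨⟨by simp [hxlen], isFactor_of_prefix hxfac (List.dropLast_prefix x)⟩, ?_, ?_⟩
      · rw [hdl]
        rw [List.prefix_take_iff]
        exact ⟨hxpre, hℓ⟩
      · intro i hi hocc
        have hocc' : OccIn w x i := occIn_of_prefix (List.dropLast_prefix x) hocc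
        have hbound : i + w.length ≤ ℓ := by
          have := hocc.1
          simpa [hxlen] using this
        rcases hxno i hi with h | h
        · exact h hocc'
        · omega
  have := congrArg (Nat.cast : ℕ → ℤ) hnat
  push_cast at this
  rw [Finset.card_union_of_disjoint hdisj] at this
  push_cast at this
  omega
end Aux7
section Aux8
variable {A : Type*} [Fintype A] {u : ℕ → A}
open scoped Classical

noncomputable def CRallF (u : ℕ → A) [Fintype A] (w : List A) (N : ℕ) : Finset (List A) :=
  (Finset.Icc (w.length + 1) (N + w.length + 1)).biUnion (CRsetF u w)

lemma CR_drop_eq {w c : List A} {ℓ : ℕ} (hc : c ∈ CRsetF u w ℓ) :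
    c.drop (ℓ - w.length) = w := by
  obtain ⟨⟨hlen, -⟩, -, ⟨hb, hpre⟩, hpos, -⟩ := mem_CRsetF.1 hc
  have hl : (c.drop (ℓ - w.length)).length = w.length := by
    simp [hlen]; omega
  exact (hpre.eq_of_length hl.symm).symm

lemma return_mem_CR {w : List A} {N : ℕ}
    (hN : ∀ q, ∃ i, i + w.length ≤ N ∧ OccursAt u w (q + i)) {v : List A}
    (h : IsReturnWord u w v) :
    ∃ ℓ ∈ Finset.Icc (w.length + 1) (N + w.length + 1),
      v ++ w ∈ CRsetF u w ℓ := by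
  obtain ⟨j, k, hjk, hoj, hok, hbet, hv⟩ := h
  obtain ⟨i₀, hi₀, ho⟩ := hN (j + 1)
  have hk_le : k ≤ j + 1 + i₀ := by
    by_contra h'
    push_neg at h'
    exact hbet (j + 1 + i₀) (by omega) (by omega) ho
  set n := w.length with hn
  have hc : v ++ w = factorAt u j ((k - j) + n) := by
    rw [factorAt_add]
    rw [show j + (k - j) = k by omega]
    rw [hv]
    unfold OccursAt at hok
    rw [hn, hok]
  refine ⟨(k - j) + n, Finset.mem_Icc.2 (by omega), ?_⟩
  rw [mem_CRsetF, hc]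
  have hlen : (factorAt u j (k - j + n)).length = k - j + n := by simp
  refine ⟨⟨hlen, isFactor_factorAt u _ _⟩, ?_, ?_, by omega, ?_⟩
  · rw [List.prefix_iff_eq_take, factorAt_take u _ _ _ (by omega)]
    exact hoj.symm
  · rw [show k - j + n - n = k - j by omega, occIn_factorAt (by omega),
      show j + (k - j) = k by omega]
    exact hok
  · intro i hi0 hilt hocc
    rw [show k - j + n - n = k - j by omega] at hilt
    rw [occIn_factorAt (by omega)] at hocc
    exact hbet (j + i) (by omega) (by omega) hocc

lemma CR_return {w c : List A} {ℓ : ℕ} (hc : c ∈ CRsetF u w ℓ) :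
    IsReturnWord u w (c.take (ℓ - w.length)) := by
  obtain ⟨⟨hlen, hfac⟩, hpre, hocc, hpos, hbet⟩ := mem_CRsetF.1 hc
  set n := w.length with hn
  obtain ⟨q₀, hq₀⟩ := hfac
  have hceq : c = factorAt u q₀ ℓ := by
    unfold OccursAt at hq₀; rw [hlen] at hq₀; exact hq₀.symm
  have hnl : n < ℓ := by omega
  refine ⟨q₀, q₀ + (ℓ - n), by omega, ?_, ?_, ?_, ?_⟩
  · unfold OccursAt
    rw [← hn, ← factorAt_take u q₀ ℓ n (by omega), ← hceq]
    exact ((List.prefix_iff_eq_take).1 hpre).symm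
  · have h2 := hocc
    rw [hceq, occIn_factorAt (by omega)] at h2
    exact h2
  · intro l hl1 hl2 hol
    have hocc' : OccIn w c (l - q₀) := by
      rw [hceq, occIn_factorAt (by omega)]
      rw [show q₀ + (l - q₀) = l by omega]
      exact hol
    exact hbet (l - q₀) (by omega) (by omega) hocc'
  · rw [hceq, factorAt_take u _ _ _ (by omega)]
    congr 1
    omega

lemma returnWords_eq_CR {w : List A} {N : ℕ}
    (hN : ∀ q, ∃ i, i + w.length ≤ N ∧ OccursAt u w (q + i)) :
    returnWords u w = ↑((CRallF u w N).image (fun c => c.take (c.length - w.length))) := by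
  ext v
  simp only [returnWords, Set.mem_setOf_eq, Finset.coe_image, Set.mem_image,
    Finset.mem_coe, CRallF, Finset.mem_biUnion]
  constructor
  · intro h
    obtain ⟨ℓ, hℓ, hmem⟩ := return_mem_CR hN h
    refine ⟨v ++ w, ⟨ℓ, hℓ, hmem⟩, ?_⟩
    have hlen : (v ++ w).length = ℓ := (mem_CRsetF.1 hmem).1.1
    simp only [List.length_append] at hlen ⊢
    rw [show v.length + w.length - w.length = v.length by omega]
    exact List.take_left
  · rintro ⟨c, ⟨ℓ, hℓ, hmem⟩, rfl⟩
    have hlen : c.length = ℓ := (mem_CRsetF.1 hmem).1.1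
    rw [hlen]
    exact CR_return hmem

lemma returnWords_finite {w : List A} {N : ℕ}
    (hN : ∀ q, ∃ i, i + w.length ≤ N ∧ OccursAt u w (q + i)) :
    (returnWords u w).Finite := by
  rw [returnWords_eq_CR hN]
  exact Finset.finite_toSet _

lemma returnWords_ncard {w : List A} {N : ℕ}
    (hN : ∀ q, ∃ i, i + w.length ≤ N ∧ OccursAt u w (q + i)) :
    (returnWords u w).ncard = (CRallF u w N).card := by
  rw [returnWords_eq_CR hN, Set.ncard_coe_finset]
  apply Finset.card_image_of_injOn
  intro c hc c' hc' heq
  simp only [CRallF, Finset.mem_coe, Finset.mem_biUnion] at hc hc'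
  obtain ⟨ℓ, hℓ, hmem⟩ := hc
  obtain ⟨ℓ', hℓ', hmem'⟩ := hc'
  obtain ⟨⟨hlen, -⟩, -, -, hpos, -⟩ := mem_CRsetF.1 hmem
  obtain ⟨⟨hlen', -⟩, -, -, hpos', -⟩ := mem_CRsetF.1 hmem'
  have hdrop := CR_drop_eq hmem
  have hdrop' := CR_drop_eq hmem'
  subst hlen
  subst hlen'
  have heq' : c.take (c.length - w.length) = c'.take (c'.length - w.length) := heq
  calc c = c.take (c.length - w.length) ++ c.drop (c.length - w.length) :=
        (List.take_append_drop _ c).symm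
    _ = c'.take (c'.length - w.length) ++ c'.drop (c'.length - w.length) := by
        rw [hdrop, hdrop', heq']
    _ = c' := List.take_append_drop _ c'

end Aux8
section Aux9
variable {A : Type*} [Fintype A] {u : ℕ → A}
open scoped Classical

noncomputable def UallF (u : ℕ → A) [Fintype A] (w : List A) (N : ℕ) : Finset (List A) :=
  (Finset.Ico w.length (N + w.length + 1)).biUnion (UsetF u w)

lemma identity_R {w : List A} (hw : IsFactor u w) {N : ℕ}
    (hN : ∀ q, ∃ i, i + w.length ≤ N ∧ OccursAt u w (q + i)) :
    ((returnWords u w).ncard : ℤ) = 1 + ∑ p ∈ UallF u w N, muF u p := by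
  set n := w.length with hn
  set L := N + n + 1 with hL
  have hdisjU : ∀ ℓ ∈ Finset.Ico n L, ∀ ℓ' ∈ Finset.Ico n L, ℓ ≠ ℓ' →
      Disjoint (UsetF u w ℓ) (UsetF u w ℓ') := by
    intro ℓ _ ℓ' _ hne
    rw [Finset.disjoint_left]
    intro p h1 h2
    exact hne ((mem_UsetF.1 h1).1.1 ▸ (mem_UsetF.1 h2).1.1 ▸ rfl)
  have hsum1 : ∑ p ∈ UallF u w N, muF u p
      = ∑ ℓ ∈ Finset.Ico n L, ∑ p ∈ UsetF u w ℓ, muF u p := by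
    rw [UallF, Finset.sum_biUnion]
    intro ℓ h1 ℓ' h2 hne
    exact hdisjU ℓ h1 ℓ' h2 hne
  have hsum2 : ∀ ℓ ∈ Finset.Ico n L, ∑ p ∈ UsetF u w ℓ, muF u p
      = ((UsetF u w (ℓ+1)).card : ℤ) + ((CRsetF u w (ℓ+1)).card : ℤ)
        - ((UsetF u w ℓ).card : ℤ) := by
    intro ℓ hℓ
    have hle : n ≤ ℓ := (Finset.mem_Ico.1 hℓ).1
    have hstep := Uset_step (u := u) (w := w) (ℓ := ℓ) (by omega)
    simp only [muF]
    rw [Finset.sum_sub_distrib, hstep]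
    simp
  rw [hsum1, Finset.sum_congr rfl hsum2]
  have hsplit : ∑ ℓ ∈ Finset.Ico n L,
      (((UsetF u w (ℓ+1)).card : ℤ) + ((CRsetF u w (ℓ+1)).card : ℤ)
        - ((UsetF u w ℓ).card : ℤ))
      = (∑ ℓ ∈ Finset.Ico n L, (((UsetF u w (ℓ+1)).card : ℤ) - ((UsetF u w ℓ).card : ℤ)))
        + ∑ ℓ ∈ Finset.Ico n L, ((CRsetF u w (ℓ+1)).card : ℤ) := by
    rw [← Finset.sum_add_distrib]
    apply Finset.sum_congr rfl
    intro ℓ _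
    ring
  rw [hsplit]
  have htel : ∑ ℓ ∈ Finset.Ico n L, (((UsetF u w (ℓ+1)).card : ℤ) - ((UsetF u w ℓ).card : ℤ))
      = -1 := by
    rw [Finset.sum_Ico_eq_sum_range]
    have h := Finset.sum_range_sub (fun j => ((UsetF u w (n + j)).card : ℤ)) (L - n)
    have hL0 : UsetF u w (n + (L - n)) = ∅ := UsetF_empty hN (by omega)
    have hn0 : UsetF u w (n + 0) = {w} := by rw [Nat.add_zero, hn]; exact UsetF_self hw
    have hfin : ((UsetF u w (n + (L - n))).card : ℤ) - ((UsetF u w (n + 0)).card : ℤ) = -1 := by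
      rw [hL0, hn0]; simp
    exact Eq.trans h hfin
  have hCR : ∑ ℓ ∈ Finset.Ico n L, ((CRsetF u w (ℓ+1)).card : ℤ)
      = ((CRallF u w N).card : ℤ) := by
    have hcard : (CRallF u w N).card = ∑ ℓ ∈ Finset.Icc (n+1) L, (CRsetF u w ℓ).card := by
      apply Finset.card_biUnion
      intro ℓ _ ℓ' _ hne
      rw [Function.onFun, Finset.disjoint_left]
      intro p h1 h2
      exact hne ((mem_CRsetF.1 h1).1.1 ▸ (mem_CRsetF.1 h2).1.1 ▸ rfl)
    rw [hcard]
    push_cast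
    rw [← Finset.Ico_add_one_right_eq_Icc, Finset.sum_Ico_eq_sum_range, Finset.sum_Ico_eq_sum_range]
    have : L + 1 - (n + 1) = L - n := by omega
    rw [this]
    apply Finset.sum_congr rfl
    intro i _
    have e : n + 1 + i = n + i + 1 := by omega
    rw [e]
  rw [htel, hCR, returnWords_ncard hN]
  ring
end Aux9
section Aux10
variable {A : Type*} [Fintype A] {u : ℕ → A}
open scoped Classical

lemma UallF_facts {w p : List A} {N : ℕ} (hp : p ∈ UallF u w N) :
    IsFactor u p ∧ w <+: p ∧ w.length ≤ p.length ∧ p.length < N + w.length + 1 ∧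
      (∀ i, 0 < i → ¬ OccIn w p i) := by
  obtain ⟨ℓ, hℓ, hmem⟩ := Finset.mem_biUnion.1 hp
  obtain ⟨⟨h1, h2⟩, h3, h4⟩ := mem_UsetF.1 hmem
  rw [Finset.mem_Ico] at hℓ
  refine ⟨h2, h3, ?_, ?_, h4⟩ <;> omega

lemma UallF_anti {w : List A} {N : ℕ} {p p' : List A}
    (hp : p ∈ UallF u w N) (hp' : p' ∈ UallF u w N) (hs : p <:+ p') : p = p' := by
  obtain ⟨-, hpre, hwl, -, -⟩ := UallF_facts hp
  obtain ⟨-, -, -, -, hno⟩ := UallF_facts hp'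
  rcases Nat.lt_or_ge p.length p'.length with h | h
  · exfalso
    refine hno (p'.length - p.length) (by omega) ⟨by omega, ?_⟩
    rw [suffix_drop_eq hs]
    exact hpre
  · exact hs.eq_of_length (le_antisymm hs.length_le h)

lemma UallF_cov {w : List A} {N : ℕ}
    (hN : ∀ q, ∃ i, i + w.length ≤ N ∧ OccursAt u w (q + i))
    {x : List A} (hx : IsFactor u x) (hxl : x.length = N + w.length + 1) :
    ∃ p ∈ UallF u w N, p <:+ x := by
  classical
  set n := w.length with hn
  set L := N + n + 1 with hL
  obtain ⟨q₀, hq₀⟩ := hx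
  have hxeq : x = factorAt u q₀ L := by
    unfold OccursAt at hq₀; rw [hxl] at hq₀; exact hq₀.symm
  set P : ℕ → Prop := fun i => i + n ≤ L ∧ OccursAt u w (q₀ + i) with hP
  obtain ⟨i₀, hi₀, ho⟩ := hN (q₀ + 1)
  have hP1 : P (1 + i₀) := by
    constructor
    · omega
    · rw [show q₀ + (1 + i₀) = q₀ + 1 + i₀ by omega]
      exact ho
  set imax := Nat.findGreatest P L with him
  have h1 : 1 + i₀ ≤ imax := Nat.le_findGreatest (by omega) hP1
  have hPmax : P imax := Nat.findGreatest_spec (m := 1 + i₀) (by omega) hP1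
  have hmax : ∀ i, imax < i → i ≤ L → ¬ P i := by
    intro i hi hle
    exact Nat.findGreatest_is_greatest hi hle
  refine ⟨x.drop imax, ?_, List.drop_suffix _ _⟩
  have hdropeq : x.drop imax = factorAt u (q₀ + imax) (L - imax) := by
    rw [hxeq, factorAt_drop u q₀ L imax (by omega)]
  apply Finset.mem_biUnion.2
  refine ⟨L - imax, Finset.mem_Ico.2 ⟨by omega, by omega⟩, ?_⟩
  rw [mem_UsetF]
  refine ⟨⟨by simp [hxl], ?_⟩, ?_, ?_⟩
  · rw [hdropeq]; exact isFactor_factorAt u _ _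
  · rw [hdropeq, List.prefix_iff_eq_take, factorAt_take u _ _ _ (by omega)]
    exact hPmax.2.symm
  · intro i hi hocc
    have hile : imax ≤ L := Nat.findGreatest_le L
    have hb : i + n ≤ L - imax := by
      have := hocc.1
      simpa [hxl] using this
    rw [hdropeq, occIn_factorAt (by omega)] at hocc
    refine hmax (imax + i) (by omega) (by omega) ⟨by omega, ?_⟩
    rw [show q₀ + (imax + i) = q₀ + imax + i by omega]
    exact hocc

lemma FactF_zero : (FactF u 0).card = 1 := by
  have : FactF u 0 = {([] : List A)} := by
    ext x
    rw [mem_FactF, Finset.mem_singleton, List.length_eq_zero_iff]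
    constructor
    · rintro ⟨h, -⟩; exact h
    · rintro rfl
      exact ⟨rfl, ⟨0, by simp [OccursAt]⟩⟩
  rw [this]; rfl

lemma erF_nil_card : (erF u ([] : List A)).card = (FactF u 1).card := by
  have : FactF u 1 = (erF u ([] : List A)).image (fun b => [b]) := by
    ext x
    rw [mem_FactF, Finset.mem_image]
    constructor
    · rintro ⟨hlen, hfac⟩
      rw [List.length_eq_one_iff] at hlen
      obtain ⟨b, rfl⟩ := hlen
      exact ⟨b, by simp [erF, hfac], rfl⟩
    · rintro ⟨b, hb, rfl⟩
      simp only [erF, Finset.mem_filter, Finset.mem_univ, true_and] at hb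
      exact ⟨rfl, by simpa using hb⟩
  rw [this, Finset.card_image_of_injective]
  intro a b h
  simpa using h

lemma sZ_eq (n : ℕ) : ∑ v ∈ FactF u n, muF u v
    = ((FactF u (n+1)).card : ℤ) - ((FactF u n).card : ℤ) := by
  have h1 : (FactF u (n+1)).card = ∑ v ∈ FactF u n, (erF u v).card := by
    have := sum_FactF_succ (u := u) n (fun _ => (1 : ℕ))
    simpa using this
  simp only [muF]
  rw [Finset.sum_sub_distrib]
  push_cast [h1]
  simp

lemma sZ_mono (hur : UniformlyRecurrent u) (hwb : ∀ w, ¬ WeakBispecial u w) (n : ℕ) :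
    ∑ v ∈ FactF u n, muF u v ≤ ∑ v ∈ FactF u (n+1), muF u v := by
  rw [sum_FactF_succ_left n (muF u)]
  apply Finset.sum_le_sum
  intro v hv
  exact flow_ge hwb (mem_FactF.1 hv).2

lemma UallF_nil {N : ℕ} : UallF u ([] : List A) N = {([] : List A)} := by
  ext p
  rw [UallF]
  simp only [Finset.mem_biUnion, Finset.mem_singleton]
  constructor
  · rintro ⟨ℓ, hℓ, hmem⟩
    obtain ⟨⟨h1, -⟩, -, h4⟩ := mem_UsetF.1 hmem
    rcases Nat.eq_zero_or_pos ℓ with h | h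
    · rw [h] at h1; exact List.length_eq_zero_iff.1 h1
    · exfalso
      refine h4 1 (by omega) ⟨by simp only [List.length_nil, h1]; omega, List.nil_prefix⟩
  · rintro rfl
    refine ⟨0, Finset.mem_Ico.2 ⟨by simp, by simp⟩, ?_⟩
    have := UsetF_self (u := u) (w := ([] : List A)) ⟨0, by simp [OccursAt]⟩
    simp only [List.length_nil] at this
    rw [this]
    exact Finset.mem_singleton_self _

end Aux10
section Aux11
variable {A : Type*} [Fintype A] {u : ℕ → A}
open scoped Classical

lemma nil_isFactor : IsFactor u ([] : List A) := ⟨0, by simp [OccursAt]⟩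

lemma dir_mp (hur : UniformlyRecurrent u) (hwb : ∀ w, ¬ WeakBispecial u w)
    {m : ℕ} (hR : PropertyR u m) :
    ∀ n : ℕ, (Complexity u n : ℤ) = ((m : ℤ) - 1) * n + 1 := by
  -- upper bound on the complexity increments
  have hUB : ∀ n : ℕ, ∑ v ∈ FactF u n, muF u v ≤ (m : ℤ) - 1 := by
    intro n
    set w := factorAt u 0 n with hwdef
    have hw : IsFactor u w := isFactor_factorAt u 0 n
    have hwlen : w.length = n := factorAt_length u 0 n
    obtain ⟨N, hN⟩ := exists_window hur hw
    have hid := identity_R hw hN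
    have hm : ((returnWords u w).ncard : ℤ) = m := by rw [(hR w hw).2]
    have hfib : ∀ v ∈ FactF u n,
        (UallF u w N).filter (fun p => p.drop (p.length - n) = v)
          = (UallF u w N).filter (fun p => v <:+ p) := by
      intro v hv
      have hvlen : v.length = n := (mem_FactF.1 hv).1
      ext p
      simp only [Finset.mem_filter, and_congr_right_iff]
      intro hp
      have hplen : n ≤ p.length := by
        have := (UallF_facts hp).2.2.1
        omega
      constructor
      · rintro rfl
        exact List.drop_suffix _ _
      · intro hs
        have := suffix_drop_eq hs
        rwa [hvlen] at this
    have hpart : ∑ v ∈ FactF u n,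
        (∑ p ∈ (UallF u w N).filter (fun p => v <:+ p), muF u p)
        = ∑ p ∈ UallF u w N, muF u p := by
      rw [← Finset.sum_fiberwise_of_maps_to (g := fun p => p.drop (p.length - n))
          (t := FactF u n) ?_ (muF u)]
      · exact Finset.sum_congr rfl (fun v hv => by rw [hfib v hv])
      · intro p hp
        obtain ⟨hfac, -, hge, -, -⟩ := UallF_facts hp
        refine mem_FactF.2 ⟨by simp; omega, ?_⟩
        exact isFactor_of_suffix hfac (List.drop_suffix _ _)
    have hSl : ∀ v ∈ FactF u n,
        muF u v ≤ ∑ p ∈ (UallF u w N).filter (fun p => v <:+ p), muF u p := by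
      intro v hv
      obtain ⟨hvlen, hvfac⟩ := mem_FactF.1 hv
      apply Slemma_ge hwb (N + 1) (N + w.length + 1) v _ hvfac (by omega)
      · intro p hp
        have := Finset.mem_filter.1 hp
        exact ⟨(UallF_facts this.1).1, this.2⟩
      · intro p hp p' hp' hs
        exact UallF_anti (Finset.mem_filter.1 hp).1 (Finset.mem_filter.1 hp').1 hs
      · intro x hx hxl hvx
        obtain ⟨p, hp, hpx⟩ := UallF_cov hN hx hxl
        refine ⟨p, Finset.mem_filter.2 ⟨hp, ?_⟩, hpx⟩
        have hplen : n ≤ p.length := by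
          have := (UallF_facts hp).2.2.1
          omega
        exact suffix_of_suffix_length_le hvx hpx (by omega)
    calc ∑ v ∈ FactF u n, muF u v
        ≤ ∑ v ∈ FactF u n, (∑ p ∈ (UallF u w N).filter (fun p => v <:+ p), muF u p) :=
          Finset.sum_le_sum hSl
      _ = ∑ p ∈ UallF u w N, muF u p := hpart
      _ = (m : ℤ) - 1 := by omega
  -- C(1) = m
  have hC1 : ((FactF u 1).card : ℤ) = m := by
    obtain ⟨N, hN⟩ := exists_window hur (nil_isFactor (u := u))
    have hid := identity_R (nil_isFactor (u := u)) hN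
    have hm : ((returnWords u ([] : List A)).ncard : ℤ) = m := by
      rw [(hR [] (nil_isFactor (u := u))).2]
    rw [UallF_nil] at hid
    rw [Finset.sum_singleton] at hid
    rw [muF] at hid
    rw [← erF_nil_card]
    omega
  -- lower bound by monotonicity
  have hs0 : ∑ v ∈ FactF u 0, muF u v = (m : ℤ) - 1 := by
    have h := sZ_eq (u := u) 0
    rw [FactF_zero] at h
    simp only [Nat.zero_add] at h
    have h1 := hC1
    omega
  have hLB : ∀ n : ℕ, (m : ℤ) - 1 ≤ ∑ v ∈ FactF u n, muF u v := by
    intro n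
    induction n with
    | zero => omega
    | succ k ih => exact le_trans ih (sZ_mono hur hwb k)
  have hsZ : ∀ n : ℕ, ∑ v ∈ FactF u n, muF u v = (m : ℤ) - 1 := by
    intro n
    have := hUB n
    have := hLB n
    omega
  -- conclude by induction
  intro n
  rw [complexity_eq]
  induction n with
  | zero => rw [FactF_zero]; simp
  | succ k ih =>
    have hk := hsZ k
    rw [sZ_eq k] at hk
    have hexp : ((m:ℤ) - 1) * ((k:ℤ) + 1) = ((m:ℤ) - 1) * (k:ℤ) + ((m:ℤ) - 1) := by ring
    push_cast
    push_cast at ih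
    omega

lemma dir_mpr (hur : UniformlyRecurrent u) (hwb : ∀ w, ¬ WeakBispecial u w)
    {m : ℕ} (hC : ∀ n : ℕ, (Complexity u n : ℤ) = ((m : ℤ) - 1) * n + 1) :
    PropertyR u m := by
  have hcard : ∀ n : ℕ, ((FactF u n).card : ℤ) = ((m : ℤ) - 1) * n + 1 := by
    intro n
    rw [← complexity_eq]
    exact hC n
  -- neutrality
  have hB : ∀ v, IsFactor u v →
      ((epF u v).card : ℤ) + 1 = ((elF u v).card : ℤ) + ((erF u v).card : ℤ) := by
    intro v hv
    set n := v.length with hn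
    have hep : ∑ x ∈ FactF u n, ((epF u x).card : ℤ) = ((FactF u (n+2)).card : ℤ) := by
      have := sum_FactF_two (u := u) n (fun _ => (1 : ℤ))
      simpa using this.symm
    have hel : ∑ x ∈ FactF u n, ((elF u x).card : ℤ) = ((FactF u (n+1)).card : ℤ) := by
      have := sum_FactF_succ_left (u := u) n (fun _ => (1 : ℤ))
      simpa using this.symm
    have her : ∑ x ∈ FactF u n, ((erF u x).card : ℤ) = ((FactF u (n+1)).card : ℤ) := by
      have := sum_FactF_succ (u := u) n (fun _ => (1 : ℤ))
      simpa using this.symm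
    have hsum : ∑ x ∈ FactF u n,
        (((epF u x).card : ℤ) + 1 - ((elF u x).card : ℤ) - ((erF u x).card : ℤ)) = 0 := by
      rw [Finset.sum_sub_distrib, Finset.sum_sub_distrib, Finset.sum_add_distrib]
      rw [hep, hel, her]
      rw [Finset.sum_const]
      have h0 := hcard n
      have h1 := hcard (n+1)
      have h2 := hcard (n+2)
      push_cast at h0 h1 h2 ⊢
      rw [nsmul_eq_mul, mul_one, h0, h1, h2]
      ring
    have hnn : ∀ x ∈ FactF u n,
        0 ≤ ((epF u x).card : ℤ) + 1 - ((elF u x).card : ℤ) - ((erF u x).card : ℤ) := by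
      intro x hx
      have := B_nonneg hwb (mem_FactF.1 hx).2
      omega
    have hzero := (Finset.sum_eq_zero_iff_of_nonneg hnn).1 hsum
    have hv' : v ∈ FactF u n := mem_FactF.2 ⟨hn.symm, hv⟩
    have := hzero v hv'
    omega
  intro w hw
  obtain ⟨N, hN⟩ := exists_window hur hw
  refine ⟨returnWords_finite hN, ?_⟩
  have hid := identity_R hw hN
  have hSl : muF u ([] : List A) = ∑ p ∈ UallF u w N, muF u p := by
    apply Slemma_eq hB (N + w.length + 1) (N + w.length + 1) _ _ (nil_isFactor (u := u))
      (by simp)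
    · intro p hp
      exact ⟨(UallF_facts hp).1, List.nil_suffix⟩
    · intro p hp p' hp' hs
      exact UallF_anti hp hp' hs
    · intro x hx hxl _
      exact UallF_cov hN hx hxl
  have hmu : muF u ([] : List A) = (m : ℤ) - 1 := by
    rw [muF, erF_nil_card]
    have := hcard 1
    push_cast at this
    omega
  rw [← hSl, hmu] at hid
  omega

end Aux11
/-- A uniformly recurrent word with no weak bispecial factor satisfies
`R_m` if and only if `C(n) = (m-1) n + 1` for all `n ≥ 0`. -/
theorem propertyR_iff_complexity [Fintype A] (u : ℕ → A) (m : ℕ)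
    (hur : UniformlyRecurrent u) (hwb : ∀ w, ¬ WeakBispecial u w) :
    PropertyR u m ↔ ∀ n : ℕ, (Complexity u n : ℤ) = ((m : ℤ) - 1) * n + 1 :=
  ⟨fun hR => dir_mp hur hwb hR, fun hC => dir_mpr hur hwb hC⟩
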